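/- Let A be a real m×n matrix of rank r and let ℓ ≥ 1. If Ω is a standard Gaussian random n×ℓ matrix, then almost surely the rank of the product AΩ equals min(r, ℓ). -/

import Mathlib

open MeasureTheory ProbabilityTheory

noncomputable section

/-- Matrices carry the product (Borel) measurable structure, entrywise. -/
instance (n ℓ : ℕ) : MeasurableSpace (Matrix (Fin n) (Fin ℓ) ℝ) := MeasurableSpace.pi

/-- The law of a standard Gaussian random `n × ℓ` matrix: i.i.d. `N(0,1)` entries. -/
def stdGaussMat (n ℓ : ℕ) : Measure (Matrix (Fin n) (Fin ℓ) ℝ) :=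
  Measure.pi fun _ : Fin n => Measure.pi fun _ : Fin ℓ => gaussianReal 0 1

section Aux

open MvPolynomial Matrix Submodule

lemma measurable_mvpoly_eval {σ : Type*} (p : MvPolynomial σ ℝ) :
    Measurable fun x : σ → ℝ => MvPolynomial.eval x p := by
  induction p using MvPolynomial.induction_on with
  | C a => simp
  | add p q hp hq => simpa using (show Measurable fun x : σ → ℝ => MvPolynomial.eval x p + MvPolynomial.eval x q from hp.add hq)
  | mul_X p i hp => simpa using (show Measurable fun x : σ → ℝ => MvPolynomial.eval x p * x i from hp.mul (measurable_pi_apply i))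

instance : NullSingletonClass (gaussianReal 0 1) :=
  ⟨fun x => gaussianReal_absolutelyContinuous 0 one_ne_zero (measure_singleton x)⟩

lemma mvpoly_null : ∀ (k : ℕ) (p : MvPolynomial (Fin k) ℝ), p ≠ 0 →
    (Measure.pi fun _ : Fin k => gaussianReal 0 1) {x | MvPolynomial.eval x p = 0} = 0 := by
  intro k
  induction k with
  | zero =>
    intro p hp
    obtain ⟨a, rfl⟩ := MvPolynomial.C_surjective (Fin 0) p
    have ha : a ≠ 0 := fun h => hp (by rw [h, map_zero])
    have : {x : Fin 0 → ℝ | MvPolynomial.eval x (C a) = 0} = ∅ := by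
      ext x; simp [ha]
    rw [this]; simp
  | succ k ih =>
    intro p hp
    set γ : Measure ℝ := gaussianReal 0 1 with hγ
    set μk : Measure (Fin k → ℝ) := Measure.pi fun _ : Fin k => γ with hμk
    set q : Polynomial (MvPolynomial (Fin k) ℝ) := MvPolynomial.finSuccEquiv ℝ k p with hqdef
    have hq0 : q ≠ 0 := by
      simp only [hqdef, ne_eq, EmbeddingLike.map_eq_zero_iff]
      exact hp
    have hc0 : q.leadingCoeff ≠ 0 := Polynomial.leadingCoeff_ne_zero.mpr hq0
    -- the equivalence
    set e := MeasurableEquiv.piFinSuccAbove (fun _ : Fin (k+1) => ℝ) 0 with he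
    have hmp := measurePreserving_piFinSuccAbove (fun _ : Fin (k+1) => γ) 0
    -- key eval identity on pairs
    have key : ∀ (a : ℝ) (y : Fin k → ℝ),
        MvPolynomial.eval (Fin.cons a y) p = Polynomial.eval a (Polynomial.map (MvPolynomial.eval y) q) :=
      fun a y => MvPolynomial.eval_eq_eval_mv_eval' y a p
    set T : Set (ℝ × (Fin k → ℝ)) := {z | MvPolynomial.eval (Fin.cons z.1 z.2) p = 0} with hT
    have hconsm : Measurable fun z : ℝ × (Fin k → ℝ) => (Fin.cons z.1 z.2 : Fin (k+1) → ℝ) := by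
      refine measurable_pi_lambda _ fun i => ?_
      refine Fin.cases ?_ ?_ i
      · simpa using measurable_fst
      · intro j; simpa using (show Measurable fun c : ℝ × (Fin k → ℝ) => c.2 j from (measurable_pi_apply j).comp measurable_snd)
    have hTm : MeasurableSet T :=
      ((measurable_mvpoly_eval p).comp hconsm) (measurableSet_singleton 0)
    have hpre : {x : Fin (k+1) → ℝ | MvPolynomial.eval x p = 0} = e ⁻¹' T := by
      ext x
      have hx : (Fin.cons (x 0) (fun j => x ((0 : Fin (k+1)).succAbove j)) : Fin (k+1) → ℝ) = x := by
        simp only [Fin.succAbove_zero]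
        exact Fin.cons_self_tail x
      have hex : e x = (x 0, fun j => x ((0 : Fin (k+1)).succAbove j)) := rfl
      simp only [Set.mem_setOf_eq, Set.mem_preimage, hT, hex]
      rw [hx]
    rw [hpre, hmp.measure_preimage hTm.nullMeasurableSet]
    -- split T
    set B : Set (Fin k → ℝ) := {y | MvPolynomial.eval y q.leadingCoeff = 0} with hB
    have hBnull : μk B = 0 := ih _ hc0
    set U : Set (ℝ × (Fin k → ℝ)) := {z | Polynomial.map (MvPolynomial.eval z.2) q ≠ 0} with hU
    have hUm : MeasurableSet U := by
      have : U = ⋃ i : ℕ, {z : ℝ × (Fin k → ℝ) | MvPolynomial.eval z.2 (q.coeff i) ≠ 0} := by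
        ext z
        simp only [hU, Set.mem_setOf_eq, Set.mem_iUnion, ne_eq]
        rw [not_iff_comm, not_exists]
        push_neg
        constructor
        · intro h
          ext i
          simp [Polynomial.coeff_map, h i]
        · intro h i
          rw [← Polynomial.coeff_map (MvPolynomial.eval z.2) i, h]
          simp
      rw [this]
      exact MeasurableSet.iUnion fun i =>
        ((measurable_mvpoly_eval _).comp measurable_snd) (measurableSet_singleton 0) |>.compl
    have hsub : T ⊆ (Set.univ ×ˢ B) ∪ (T ∩ U) := by
      intro z hz
      by_cases h : Polynomial.map (MvPolynomial.eval z.2) q = 0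
      · left
        refine ⟨Set.mem_univ _, ?_⟩
        have hlc : q.leadingCoeff = q.coeff q.natDegree := rfl
        have := congrArg (fun P => Polynomial.coeff P q.natDegree) h
        simp only [Polynomial.coeff_map, Polynomial.coeff_zero] at this
        show MvPolynomial.eval z.2 q.leadingCoeff = 0
        rw [hlc]; exact this
      · exact Or.inr ⟨hz, h⟩
    refine measure_mono_null hsub (le_antisymm ?_ zero_le)
    refine (measure_union_le _ _).trans ?_
    have h1 : (γ.prod μk) (Set.univ ×ˢ B) = 0 := by
      rw [Measure.prod_prod, hBnull, mul_zero]
    have h2 : (γ.prod μk) (T ∩ U) = 0 := by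
      have hswap : (γ.prod μk) (T ∩ U) = (μk.prod γ) (Prod.swap ⁻¹' (T ∩ U)) := by
        rw [← Measure.prod_swap, Measure.map_apply measurable_swap (hTm.inter hUm)]
      rw [hswap]
      rw [Measure.measure_prod_null (measurable_swap (hTm.inter hUm))]
      refine ae_of_all _ fun y => ?_
      have hsec : Prod.mk y ⁻¹' (Prod.swap ⁻¹' (T ∩ U)) =
          {a : ℝ | (MvPolynomial.eval (Fin.cons a y)) p = 0 ∧
            Polynomial.map (MvPolynomial.eval y) q ≠ 0} := by
        ext a
        exact ⟨fun h => ⟨h.1, h.2⟩, fun h => ⟨h.1, h.2⟩⟩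
      show γ (Prod.mk y ⁻¹' (Prod.swap ⁻¹' (T ∩ U))) = 0
      rw [hsec]
      by_cases h : Polynomial.map (MvPolynomial.eval y) q = 0
      · have : {a : ℝ | (MvPolynomial.eval (Fin.cons a y)) p = 0 ∧
            Polynomial.map (MvPolynomial.eval y) q ≠ 0} = ∅ := by
          ext a; simp [h]
        simp [this]
      · refine measure_mono_null (fun a ha => ?_) ((Polynomial.finite_setOf_isRoot h).measure_zero γ)
        have : Polynomial.eval a (Polynomial.map (MvPolynomial.eval y) q) = 0 := by
          rw [← key a y]; exact ha.1
        exact this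
    rw [h1, h2]; simp

lemma eval_sumToIter {S₁ S₂ : Type*} (a : S₁ → ℝ) (y : S₂ → ℝ) (p : MvPolynomial (S₁ ⊕ S₂) ℝ) :
    MvPolynomial.eval (Sum.elim a y) p =
      MvPolynomial.eval a (MvPolynomial.map (MvPolynomial.eval y)
        (MvPolynomial.sumToIter ℝ S₁ S₂ p)) := by
  induction p using MvPolynomial.induction_on with
  | C c => simp [sumToIter_C]
  | add p q hp hq => simp [map_add, hp, hq]
  | mul_X p i hp => cases i <;> simp [sumToIter_Xl, sumToIter_Xr, _root_.map_mul, hp]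

lemma sumToIter_ne_zero {S₁ S₂ : Type*} {p : MvPolynomial (S₁ ⊕ S₂) ℝ} (hp : p ≠ 0) :
    MvPolynomial.sumToIter ℝ S₁ S₂ p ≠ 0 := by
  intro h
  apply hp
  have : (MvPolynomial.sumRingEquiv ℝ S₁ S₂) p = MvPolynomial.sumToIter ℝ S₁ S₂ p := by
    clear h hp
    induction p using MvPolynomial.induction_on with
    | C c => simp [sumToIter_C]
    | add p q hp hq => simp [map_add, hp, hq]
    | mul_X p i hp => cases i <;> simp [sumToIter_Xl, sumToIter_Xr, _root_.map_mul, hp]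
  exact (MvPolynomial.sumRingEquiv ℝ S₁ S₂).injective (by rw [this, h, map_zero])

def eIdx (n ℓ : ℕ) : (Fin (n+1) × Fin ℓ) ≃ (Fin ℓ ⊕ (Fin n × Fin ℓ)) where
  toFun x := Fin.cases (Sum.inl x.2) (fun i => Sum.inr (i, x.2)) x.1
  invFun s := Sum.elim (fun c => ((0 : Fin (n+1)), c)) (fun w => (w.1.succ, w.2)) s
  left_inv := by rintro ⟨i, c⟩; refine Fin.cases ?_ (fun j => ?_) i <;> simp
  right_inv := by rintro (c | w) <;> simp

lemma matPoly_null (ℓ : ℕ) : ∀ (n : ℕ) (p : MvPolynomial (Fin n × Fin ℓ) ℝ), p ≠ 0 →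
    stdGaussMat n ℓ {Ω | MvPolynomial.eval (fun v => Ω v.1 v.2) p = 0} = 0 := by
  intro n
  induction n with
  | zero =>
    intro p hp
    obtain ⟨a, rfl⟩ := MvPolynomial.C_surjective (Fin 0 × Fin ℓ) p
    have ha : a ≠ 0 := fun h => hp (by rw [h, map_zero])
    have : {Ω : Matrix (Fin 0) (Fin ℓ) ℝ | MvPolynomial.eval (fun v : Fin 0 × Fin ℓ => Ω v.1 v.2)
        (C a : MvPolynomial (Fin 0 × Fin ℓ) ℝ) = 0} = ∅ := by
      ext Ω; simp [ha]
    rw [this]; simp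
  | succ n ih =>
    intro p hp
    set ν : Measure (Fin ℓ → ℝ) := Measure.pi fun _ : Fin ℓ => gaussianReal 0 1 with hν
    set q : MvPolynomial (Fin ℓ) (MvPolynomial (Fin n × Fin ℓ) ℝ) :=
      MvPolynomial.sumToIter ℝ _ _ (MvPolynomial.rename (eIdx n ℓ) p) with hqdef
    have hren : MvPolynomial.rename (eIdx n ℓ) p ≠ 0 := by
      intro h
      exact hp ((MvPolynomial.rename_injective _ (eIdx n ℓ).injective) (by rw [h, map_zero]))
    have hq0 : q ≠ 0 := sumToIter_ne_zero hren
    obtain ⟨d, hd⟩ := MvPolynomial.ne_zero_iff.mp hq0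
    have key : ∀ (a : Fin ℓ → ℝ) (y : Fin n → Fin ℓ → ℝ),
        MvPolynomial.eval (fun v : Fin (n+1) × Fin ℓ => (Fin.cons a y : Fin (n+1) → Fin ℓ → ℝ) v.1 v.2) p
          = MvPolynomial.eval a (MvPolynomial.map (MvPolynomial.eval fun w : Fin n × Fin ℓ => y w.1 w.2) q) := by
      intro a y
      have h1 : (fun v : Fin (n+1) × Fin ℓ => (Fin.cons a y : Fin (n+1) → Fin ℓ → ℝ) v.1 v.2)
          = (Sum.elim a (fun w : Fin n × Fin ℓ => y w.1 w.2)) ∘ (eIdx n ℓ) := by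
        funext v
        obtain ⟨i, c⟩ := v
        refine Fin.cases ?_ (fun j => ?_) i <;> simp [eIdx]
      rw [h1, ← MvPolynomial.eval_rename, hqdef, ← eval_sumToIter]
    have hmp := measurePreserving_piFinSuccAbove (fun _ : Fin (n+1) => ν) 0
    set e := MeasurableEquiv.piFinSuccAbove (fun _ : Fin (n+1) => (Fin ℓ → ℝ)) 0 with he
    set T : Set ((Fin ℓ → ℝ) × (Fin n → Fin ℓ → ℝ)) :=
      {z | MvPolynomial.eval (fun v : Fin (n+1) × Fin ℓ =>
        (Fin.cons z.1 z.2 : Fin (n+1) → Fin ℓ → ℝ) v.1 v.2) p = 0} with hT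
    have hconsm : Measurable fun z : (Fin ℓ → ℝ) × (Fin n → Fin ℓ → ℝ) =>
        (fun v : Fin (n+1) × Fin ℓ => (Fin.cons z.1 z.2 : Fin (n+1) → Fin ℓ → ℝ) v.1 v.2) := by
      refine measurable_pi_lambda _ fun v => ?_
      obtain ⟨i, c⟩ := v
      refine Fin.cases ?_ (fun j => ?_) i
      · simpa using (show Measurable fun z : (Fin ℓ → ℝ) × (Fin n → Fin ℓ → ℝ) => z.1 c from (measurable_pi_apply c).comp measurable_fst)
      · simpa using (show Measurable fun z : (Fin ℓ → ℝ) × (Fin n → Fin ℓ → ℝ) => z.2 j c from (measurable_pi_apply c).comp ((measurable_pi_apply j).comp measurable_snd))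
    have hTm : MeasurableSet T :=
      ((measurable_mvpoly_eval p).comp hconsm) (measurableSet_singleton 0)
    have hpre : {Ω : Fin (n+1) → Fin ℓ → ℝ | MvPolynomial.eval (fun v : Fin (n+1) × Fin ℓ => Ω v.1 v.2) p = 0}
        = e ⁻¹' T := by
      ext Ω
      have hx : (Fin.cons (Ω 0) (fun j => Ω ((0 : Fin (n+1)).succAbove j)) : Fin (n+1) → Fin ℓ → ℝ) = Ω := by
        simp only [Fin.succAbove_zero]
        exact Fin.cons_self_tail Ω
      have hc : (Fin.cons (e Ω).1 (e Ω).2 : Fin (n+1) → Fin ℓ → ℝ) = Ω := hx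
      change MvPolynomial.eval (fun v : Fin (n+1) × Fin ℓ => Ω v.1 v.2) p = 0 ↔
        MvPolynomial.eval (fun v : Fin (n+1) × Fin ℓ =>
          (Fin.cons (e Ω).1 (e Ω).2 : Fin (n+1) → Fin ℓ → ℝ) v.1 v.2) p = 0
      simp only [hc]
    show (Measure.pi fun _ : Fin (n+1) => ν)
      {Ω : Fin (n+1) → Fin ℓ → ℝ | MvPolynomial.eval (fun v : Fin (n+1) × Fin ℓ => Ω v.1 v.2) p = 0} = 0
    rw [hpre, hmp.measure_preimage hTm.nullMeasurableSet]
    set μn : Measure (Fin n → Fin ℓ → ℝ) := Measure.pi fun _ : Fin n => ν with hμn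
    set B : Set (Fin n → Fin ℓ → ℝ) :=
      {y | MvPolynomial.eval (fun w : Fin n × Fin ℓ => y w.1 w.2) (MvPolynomial.coeff d q) = 0} with hB
    have hBnull : μn B = 0 := ih _ hd
    set U : Set ((Fin ℓ → ℝ) × (Fin n → Fin ℓ → ℝ)) :=
      {z | MvPolynomial.map (MvPolynomial.eval fun w : Fin n × Fin ℓ => z.2 w.1 w.2) q ≠ 0} with hU
    have hchar : ∀ z : (Fin ℓ → ℝ) × (Fin n → Fin ℓ → ℝ),
        (MvPolynomial.map (MvPolynomial.eval fun w : Fin n × Fin ℓ => z.2 w.1 w.2) q = 0) ↔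
        ∀ d' ∈ q.support,
          MvPolynomial.eval (fun w : Fin n × Fin ℓ => z.2 w.1 w.2) (MvPolynomial.coeff d' q) = 0 := by
      intro z
      constructor
      · intro h d' _
        rw [MvPolynomial.eq_zero_iff] at h
        have := h d'
        rwa [MvPolynomial.coeff_map] at this
      · intro h
        rw [MvPolynomial.eq_zero_iff]
        intro d'
        rw [MvPolynomial.coeff_map]
        by_cases hd' : d' ∈ q.support
        · exact h d' hd'
        · rw [MvPolynomial.notMem_support_iff.mp hd', map_zero]
    have hUm : MeasurableSet U := by
      have hUeq : U = ⋃ d' ∈ q.support, {z : (Fin ℓ → ℝ) × (Fin n → Fin ℓ → ℝ) |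
          MvPolynomial.eval (fun w : Fin n × Fin ℓ => z.2 w.1 w.2) (MvPolynomial.coeff d' q) ≠ 0} := by
        ext z
        simp only [hU, Set.mem_setOf_eq, Set.mem_iUnion, ne_eq, exists_prop]
        rw [not_iff_comm, not_exists]
        push_neg
        exact (hchar z).symm
      rw [hUeq]
      refine Set.Finite.measurableSet_biUnion q.support.finite_toSet fun d' _ => ?_
      have hm : Measurable fun z : (Fin ℓ → ℝ) × (Fin n → Fin ℓ → ℝ) =>
          MvPolynomial.eval (fun w : Fin n × Fin ℓ => z.2 w.1 w.2) (MvPolynomial.coeff d' q) := by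
        refine (measurable_mvpoly_eval _).comp ?_
        exact measurable_pi_lambda _ fun w =>
          (measurable_pi_apply w.2).comp ((measurable_pi_apply w.1).comp measurable_snd)
      exact (hm (measurableSet_singleton 0)).compl
    have hsub : T ⊆ (Set.univ ×ˢ B) ∪ (T ∩ U) := by
      intro z hz
      by_cases h : MvPolynomial.map (MvPolynomial.eval fun w : Fin n × Fin ℓ => z.2 w.1 w.2) q = 0
      · left
        refine ⟨Set.mem_univ _, ?_⟩
        exact (hchar z).mp h d (MvPolynomial.mem_support_iff.mpr hd)
      · exact Or.inr ⟨hz, h⟩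
    refine measure_mono_null hsub (le_antisymm ?_ zero_le)
    refine (measure_union_le _ _).trans ?_
    have h1 : (ν.prod μn) (Set.univ ×ˢ B) = 0 := by
      rw [Measure.prod_prod, hBnull, mul_zero]
    have h2 : (ν.prod μn) (T ∩ U) = 0 := by
      have hswap : (ν.prod μn) (T ∩ U) = (μn.prod ν) (Prod.swap ⁻¹' (T ∩ U)) := by
        rw [← Measure.prod_swap, Measure.map_apply measurable_swap (hTm.inter hUm)]
      rw [hswap, Measure.measure_prod_null (measurable_swap (hTm.inter hUm))]
      refine ae_of_all _ fun y => ?_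
      have hsec : Prod.mk y ⁻¹' (Prod.swap ⁻¹' (T ∩ U)) =
          {a : Fin ℓ → ℝ | MvPolynomial.eval (fun v : Fin (n+1) × Fin ℓ =>
              (Fin.cons a y : Fin (n+1) → Fin ℓ → ℝ) v.1 v.2) p = 0 ∧
            MvPolynomial.map (MvPolynomial.eval fun w : Fin n × Fin ℓ => y w.1 w.2) q ≠ 0} := by
        ext a
        exact ⟨fun h => ⟨h.1, h.2⟩, fun h => ⟨h.1, h.2⟩⟩
      show ν (Prod.mk y ⁻¹' (Prod.swap ⁻¹' (T ∩ U))) = 0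
      rw [hsec]
      by_cases h : MvPolynomial.map (MvPolynomial.eval fun w : Fin n × Fin ℓ => y w.1 w.2) q = 0
      · have he : {a : Fin ℓ → ℝ | MvPolynomial.eval (fun v : Fin (n+1) × Fin ℓ =>
              (Fin.cons a y : Fin (n+1) → Fin ℓ → ℝ) v.1 v.2) p = 0 ∧
            MvPolynomial.map (MvPolynomial.eval fun w : Fin n × Fin ℓ => y w.1 w.2) q ≠ 0} = ∅ := by
          ext a; simp [h]
        rw [he]; simp
      · refine measure_mono_null (fun a ha => ?_) (mvpoly_null ℓ _ h)
        show MvPolynomial.eval a (MvPolynomial.map (MvPolynomial.eval fun w : Fin n × Fin ℓ => y w.1 w.2) q) = 0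
        rw [← key a y]
        exact ha.1
    rw [h1, h2]; simp

-- extract an independent subfamily of prescribed size from a spanning family
lemma exists_indep_subfamily {α : Type*} {V : Type*} [AddCommGroup V] [Module ℝ V]
    [FiniteDimensional ℝ V] (w : α → V) (k : ℕ)
    (hspan : Module.finrank ℝ (span ℝ (Set.range w)) = k) :
    ∃ s : Fin k → α, LinearIndependent ℝ (w ∘ s) := by
  obtain ⟨b, hbsub, hbspan, hbind⟩ := exists_linearIndependent ℝ (Set.range w)
  have hbfin : b.Finite := hbind.set_finite_of_isNoetherian
  haveI : Fintype b := hbfin.fintype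
  have hcard : b.toFinset.card = k := by
    rw [← finrank_span_set_eq_card hbind, hbspan, hspan]
  have hcard' : Fintype.card b = k := by rwa [Set.toFinset_card] at hcard
  obtain ⟨g⟩ : Nonempty (Fin k ≃ b) := ⟨(Fintype.equivFinOfCardEq hcard').symm⟩
  have hmem : ∀ i : Fin k, (g i : V) ∈ Set.range w := fun i => hbsub (g i).2
  choose s hs using fun i => hmem i
  refine ⟨s, ?_⟩
  have : (w ∘ s) = fun i => ((g i : b) : V) := funext fun i => hs i
  rw [this]
  exact hbind.comp g g.injective

lemma rank_submatrix_le' {m' n' k1 k2 : Type*} [Fintype m'] [Fintype n'] [Fintype k1] [Fintype k2]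
    (M : Matrix m' n' ℝ) (s : k1 → m') (u : k2 → n') :
    (M.submatrix s u).rank ≤ M.rank := by
  rw [rank_eq_finrank_span_cols, rank_eq_finrank_span_cols]
  have hsub : span ℝ (Set.range (M.submatrix s u)ᵀ) ≤
      Submodule.map (LinearMap.funLeft ℝ ℝ s) (span ℝ (Set.range Mᵀ)) := by
    rw [span_le]
    rintro x ⟨c, rfl⟩
    refine ⟨Mᵀ (u c), subset_span (Set.mem_range_self _), ?_⟩
    rfl
  calc Module.finrank ℝ (span ℝ (Set.range (M.submatrix s u)ᵀ))
      ≤ Module.finrank ℝ (Submodule.map (LinearMap.funLeft ℝ ℝ s) (span ℝ (Set.range Mᵀ))) :=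
        Submodule.finrank_mono hsub
    _ ≤ Module.finrank ℝ (span ℝ (Set.range Mᵀ)) := Submodule.finrank_map_le _ _

lemma exists_good_witness {m n ℓ : ℕ} (A : Matrix (Fin m) (Fin n) ℝ) {r k : ℕ}
    (hA : A.rank = r) (hkr : k ≤ r) (hkℓ : k ≤ ℓ) :
    ∃ (s : Fin k → Fin m) (Ω₀ : Matrix (Fin n) (Fin ℓ) ℝ),
      ((A * Ω₀).submatrix s (Fin.castLE hkℓ)).det ≠ 0 := by
  classical
  have h1 : Module.finrank ℝ (span ℝ (Set.range Aᵀ)) = r := by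
    exact (rank_eq_finrank_span_cols A).symm.trans hA
  obtain ⟨t, ht⟩ := exists_indep_subfamily Aᵀ r h1
  set t' : Fin k → Fin n := t ∘ Fin.castLE hkr with ht'def
  have ht' : LinearIndependent ℝ (Aᵀ ∘ t') :=
    ht.comp (Fin.castLE hkr) (Fin.castLE_injective hkr)
  set Ω₀ : Matrix (Fin n) (Fin ℓ) ℝ :=
    Matrix.of fun j c => if h : (c : ℕ) < k then (if t' ⟨c, h⟩ = j then (1:ℝ) else 0) else 0 with hΩ₀
  set N : Matrix (Fin m) (Fin k) ℝ := (A * Ω₀).submatrix id (Fin.castLE hkℓ) with hN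
  have hNeq : N = Matrix.of fun i dd => A i (t' dd) := by
    ext i dd
    simp only [hN, submatrix_apply, id_eq, mul_apply, hΩ₀, Matrix.of_apply]
    have hlt : ((Fin.castLE hkℓ dd : Fin ℓ) : ℕ) < k := dd.2
    rw [Finset.sum_congr rfl (fun j _ => by rw [dif_pos hlt])]
    have : (⟨(Fin.castLE hkℓ dd : Fin ℓ), hlt⟩ : Fin k) = dd := by
      apply Fin.ext; rfl
    rw [Finset.sum_congr rfl (fun j _ => by rw [this])]
    simp [mul_ite]
  have hNT : LinearIndependent ℝ (fun dd => Nᵀ dd) := by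
    have : (fun dd => Nᵀ dd) = Aᵀ ∘ t' := by
      funext dd; ext i; simp [hNeq, transpose_apply]; rfl
    rw [this]; exact ht'
  have hrankN : N.rank = k := by
    rw [rank_eq_finrank_span_cols]; exact (finrank_span_eq_card hNT).trans (Fintype.card_fin k)
  have hrowspan : Module.finrank ℝ (span ℝ (Set.range N)) = k := by
    exact (rank_eq_finrank_span_row N).symm.trans hrankN
  obtain ⟨s, hs⟩ := exists_indep_subfamily N k hrowspan
  refine ⟨s, Ω₀, ?_⟩
  have hQ : LinearIndependent ℝ (fun i => ((A * Ω₀).submatrix s (Fin.castLE hkℓ)) i) := hs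
  have hu : IsUnit ((A * Ω₀).submatrix s (Fin.castLE hkℓ)) :=
    linearIndependent_rows_iff_isUnit.mp hQ
  exact ((Matrix.isUnit_iff_isUnit_det _).mp hu).ne_zero

lemma eval_detPoly {m n ℓ k : ℕ} (A : Matrix (Fin m) (Fin n) ℝ)
    (s : Fin k → Fin m) (u : Fin k → Fin ℓ) (Ω : Matrix (Fin n) (Fin ℓ) ℝ) :
    MvPolynomial.eval (fun v : Fin n × Fin ℓ => Ω v.1 v.2)
      (Matrix.det (Matrix.of fun i c : Fin k =>
        ∑ j : Fin n, MvPolynomial.C (A (s i) j) * MvPolynomial.X (j, u c)))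
      = ((A * Ω).submatrix s u).det := by
  rw [RingHom.map_det]
  congr 1
  ext i c
  simp [Matrix.map_apply, mul_apply, map_sum]

end Aux

open Matrix in
/-- If `A` is a real `m × n` matrix of rank `r` and `Ω` is a standard Gaussian random
`n × ℓ` matrix with `ℓ ≥ 1`, then almost surely `rank (A Ω) = min r ℓ`. -/
theorem rank_mul_gaussian_ae (m n : ℕ) (A : Matrix (Fin m) (Fin n) ℝ) (r : ℕ)
    (hA : A.rank = r) (ℓ : ℕ) (hℓ : 1 ≤ ℓ) :
    ∀ᵐ Ω ∂(stdGaussMat n ℓ), (A * Ω).rank = min r ℓ := by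
  set k := min r ℓ with hk
  have hkr : k ≤ r := min_le_left r ℓ
  have hkℓ : k ≤ ℓ := min_le_right r ℓ
  have hupper : ∀ Ω : Matrix (Fin n) (Fin ℓ) ℝ, (A * Ω).rank ≤ k := by
    intro Ω
    refine le_min ?_ ?_
    · rw [← hA]; exact rank_mul_le_left A Ω
    · exact (rank_mul_le_right A Ω).trans (rank_le_width Ω)
  obtain ⟨s, Ω₀, hdet⟩ := exists_good_witness A hA hkr hkℓ
  set u : Fin k → Fin ℓ := Fin.castLE hkℓ with hu
  set p : MvPolynomial (Fin n × Fin ℓ) ℝ :=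
    Matrix.det (Matrix.of fun i c : Fin k =>
      ∑ j : Fin n, MvPolynomial.C (A (s i) j) * MvPolynomial.X (j, u c)) with hp
  have hp0 : p ≠ 0 := by
    intro h
    apply hdet
    rw [← eval_detPoly A s u Ω₀, ← hp, h, map_zero]
  have hgood : ∀ Ω : Matrix (Fin n) (Fin ℓ) ℝ,
      MvPolynomial.eval (fun v : Fin n × Fin ℓ => Ω v.1 v.2) p ≠ 0 → (A * Ω).rank = k := by
    intro Ω hev
    have hdet' : ((A * Ω).submatrix s u).det ≠ 0 := by
      rw [← eval_detPoly A s u Ω, ← hp]; exact hev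
    have hunit : IsUnit ((A * Ω).submatrix s u) :=
      (Matrix.isUnit_iff_isUnit_det _).mpr (isUnit_iff_ne_zero.mpr hdet')
    have hr1 : ((A * Ω).submatrix s u).rank = k := by
      rw [rank_of_isUnit _ hunit, Fintype.card_fin]
    have := rank_submatrix_le' (A * Ω) s u
    rw [hr1] at this
    exact le_antisymm (hupper Ω) this
  rw [ae_iff]
  refine measure_mono_null (fun Ω hΩ => ?_) (matPoly_null ℓ n p hp0)
  by_contra hev
  exact hΩ (hgood Ω hev)
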